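/- Let G be a simple graph with at least 3 vertices in which every two distinct vertices are biconnected, let e be an edge of G with endpoints u and v, and let P be a path from u to v in G − e (the graph obtained from G by deleting e). Then for every edge g of G − e, either g is an edge of P, or there exists an edge f of P such that g and f lie on a common cycle of G − e. -/

import Mathlib

open SimpleGraph

/-- Two vertices `a` and `b` of a simple graph `H` are *biconnected* in `H` if `a ≠ b` and
there exist two distinct paths from `a` to `b` in `H` whose only common vertices are
`a` and `b`. -/
def Biconnected {V : Type*} (H : SimpleGraph V) (a b : V) : Prop :=
  a ≠ b ∧ ∃ p q : H.Path a b, p ≠ q ∧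
    ∀ x, x ∈ p.1.support → x ∈ q.1.support → (x = a ∨ x = b)

namespace EdgeCycleAux

variable {V : Type*} {G : SimpleGraph V}

lemma append_isPath {a b c : V} {p : G.Walk a b} {q : G.Walk b c}
    (hp : p.IsPath) (hq : q.IsPath)
    (h : ∀ x, x ∈ p.support → x ∈ q.support → x = b) :
    (p.append q).IsPath := by
  rw [Walk.isPath_def, Walk.support_append, List.nodup_append]
  refine ⟨hp.support_nodup, hq.support_nodup.tail, ?_⟩
  intro x hxp y hxq rfl
  have hxq' : x ∈ q.support := List.mem_of_mem_tail hxq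
  have hxb := h x hxp hxq'
  rw [hxb] at hxq
  have hc := q.support_eq_cons
  have hnd := hq.support_nodup
  rw [hc, List.nodup_cons] at hnd
  exact hnd.1 hxq

lemma exists_firstHit_walk {x y : V} (W : G.Walk x y) (T : Set V) (hy : y ∈ T) :
    ∃ (z : V) (W' : G.Walk x z), z ∈ T ∧
      (∀ w ∈ W'.support, w ∈ T → w = z) ∧ (∀ w ∈ W'.support, w ∈ W.support) := by
  classical
  induction W with
  | nil =>
    refine ⟨_, Walk.nil, hy, ?_, ?_⟩
    · intro w hw _; simpa using hw
    · intro w hw; exact hw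
  | @cons u v w h' p ih =>
    by_cases hu : u ∈ T
    · refine ⟨u, Walk.nil, hu, ?_, ?_⟩
      · intro w' hw' _; simpa using hw'
      · intro w' hw'; simp at hw'; simp [hw']
    · obtain ⟨z, W', hz, honly, hsub⟩ := ih hy
      refine ⟨z, Walk.cons h' W', hz, ?_, ?_⟩
      · intro w' hw' hwT
        rw [Walk.support_cons, List.mem_cons] at hw'
        rcases hw' with rfl | hw'
        · exact absurd hwT hu
        · exact honly w' hw' hwT
      · intro w' hw'
        rw [Walk.support_cons, List.mem_cons] at hw'
        rcases hw' with rfl | hw'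
        · exact Walk.start_mem_support _
        · rw [Walk.support_cons]
          exact List.mem_cons_of_mem _ (hsub w' hw')

lemma exists_firstHit [DecidableEq V] {x y : V} (W : G.Walk x y) (T : Set V) (hy : y ∈ T) :
    ∃ (z : V) (W' : G.Walk x z), W'.IsPath ∧ z ∈ T ∧
      (∀ w ∈ W'.support, w ∈ T → w = z) ∧ (∀ w ∈ W'.support, w ∈ W.support) := by
  obtain ⟨z, W0, hz, honly, hsub⟩ := exists_firstHit_walk W T hy
  refine ⟨z, W0.toPath.1, W0.toPath.2, hz, ?_, ?_⟩
  · exact fun w hw hwT => honly w (W0.support_toPath_subset hw) hwT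
  · exact fun w hw => hsub w (W0.support_toPath_subset hw)

lemma not_end_mem_takeUntil [DecidableEq V] {a u z : V} {W : G.Walk a u}
    (hW : W.IsPath) (hz : z ∈ W.support) (hne : z ≠ u) :
    u ∉ (W.takeUntil z hz).support := by
  intro hu
  have hspec := W.take_spec hz
  have hnd := hW.support_nodup
  rw [← hspec, Walk.support_append, List.nodup_append] at hnd
  obtain ⟨-, -, hdisj⟩ := hnd
  have hu2 : u ∈ (W.dropUntil z hz).support := Walk.end_mem_support _
  rw [Walk.support_eq_cons] at hu2
  have hu3 : u ∈ (W.dropUntil z hz).support.tail := by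
    rcases List.mem_cons.mp hu2 with h | h
    · exact absurd h.symm hne
    · exact h
  exact hdisj u hu u hu3 rfl

lemma not_start_mem_dropUntil [DecidableEq V] {a u z : V} {W : G.Walk a u}
    (hW : W.IsPath) (hz : z ∈ W.support) (hne : z ≠ a) :
    a ∉ (W.dropUntil z hz).support := by
  intro ha
  have hspec := W.take_spec hz
  have hnd := hW.support_nodup
  rw [← hspec, Walk.support_append, List.nodup_append] at hnd
  obtain ⟨-, -, hdisj⟩ := hnd
  have ha2 : a ∈ (W.dropUntil z hz).support.tail := by
    have ha' : a ∈ (W.dropUntil z hz).support := ha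
    rw [Walk.support_eq_cons] at ha'
    rcases List.mem_cons.mp ha' with h | h
    · exact absurd h hne.symm
    · exact h
  exact hdisj a (Walk.start_mem_support _) a ha2 rfl

lemma exists_path_avoid (hbi : ∀ a b : V, a ≠ b → Biconnected G a b)
    {x y z : V} (hxy : x ≠ y) (hzx : z ≠ x) (hzy : z ≠ y) :
    ∃ W : G.Walk x y, W.IsPath ∧ z ∉ W.support := by
  obtain ⟨-, p, q, -, hpq⟩ := hbi x y hxy
  by_cases h : z ∈ p.1.support
  · refine ⟨q.1, q.2, fun hq => ?_⟩
    rcases hpq z h hq with rfl | rfl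
    · exact hzx rfl
    · exact hzy rfl
  · exact ⟨p.1, p.2, h⟩


lemma fan_aux [DecidableEq V] {a u v : V} (p1 p2 : G.Walk a u)
    (h1 : p1.IsPath) (h2 : p2.IsPath)
    (hsh : ∀ w, w ∈ p1.support → w ∈ p2.support → w = a ∨ w = u)
    (hv1 : v ∈ p1.support) (hvu : v ≠ u) (hva : v ≠ a) :
    ∃ (A1 : G.Walk a u) (A2 : G.Walk a v), A1.IsPath ∧ A2.IsPath ∧
      v ∉ A1.support ∧ u ∉ A2.support ∧
      ∀ w, w ∈ A1.support → w ∈ A2.support → w = a := by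
  refine ⟨p2, p1.takeUntil v hv1, h2, h1.takeUntil _, ?_, ?_, ?_⟩
  · intro hv2
    rcases hsh v hv1 hv2 with h | h
    · exact hva h
    · exact hvu h
  · exact not_end_mem_takeUntil h1 hv1 hvu
  · intro w hw2 hwt
    have hw1 : w ∈ p1.support := Walk.support_takeUntil_subset _ hv1 hwt
    rcases hsh w hw1 hw2 with h | h
    · exact h
    · rw [h] at hwt
      exact absurd hwt (not_end_mem_takeUntil h1 hv1 hvu)

lemma fan_aux2 [DecidableEq V] {a u v z : V} (p1 p2 : G.Walk a u)
    (h1 : p1.IsPath) (h2 : p2.IsPath)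
    (hsh : ∀ w, w ∈ p1.support → w ∈ p2.support → w = a ∨ w = u)
    (hv2 : v ∉ p2.support)
    (rr : G.Walk v z) (hrr : rr.IsPath)
    (hz1 : z ∈ p1.support)
    (hT : ∀ w, w ∈ rr.support → (w ∈ p1.support ∨ w ∈ p2.support) → w = z)
    (hur : u ∉ rr.support) :
    ∃ (A1 : G.Walk a u) (A2 : G.Walk a v), A1.IsPath ∧ A2.IsPath ∧
      v ∉ A1.support ∧ u ∉ A2.support ∧
      ∀ w, w ∈ A1.support → w ∈ A2.support → w = a := by
  have hzu : z ≠ u := fun h => hur (h ▸ rr.end_mem_support)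
  refine ⟨p2, (p1.takeUntil z hz1).append rr.reverse, h2, ?_, hv2, ?_, ?_⟩
  · refine append_isPath (h1.takeUntil _) hrr.reverse ?_
    intro x hxt hxr
    rw [Walk.support_reverse, List.mem_reverse] at hxr
    exact hT x hxr (Or.inl (Walk.support_takeUntil_subset _ hz1 hxt))
  · rw [Walk.mem_support_append_iff]
    rintro (h | h)
    · exact not_end_mem_takeUntil h1 hz1 hzu h
    · rw [Walk.support_reverse, List.mem_reverse] at h
      exact hur h
  · intro w hw2 hwA
    rw [Walk.mem_support_append_iff] at hwA
    rcases hwA with h | h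
    · have hw1 : w ∈ p1.support := Walk.support_takeUntil_subset _ hz1 h
      rcases hsh w hw1 hw2 with hh | hh
      · exact hh
      · rw [hh] at h
        exact absurd h (not_end_mem_takeUntil h1 hz1 hzu)
    · rw [Walk.support_reverse, List.mem_reverse] at h
      have hwz : w = z := hT w h (Or.inr hw2)
      rw [hwz] at hw2 ⊢
      rcases hsh z hz1 hw2 with hh | hh
      · exact hh
      · exact absurd hh hzu

lemma exists_fan [DecidableEq V] (hbi : ∀ a b : V, a ≠ b → Biconnected G a b)
    {a u v : V} (hau : a ≠ u) (hav : a ≠ v) (hvu : v ≠ u) :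
    ∃ (A1 : G.Walk a u) (A2 : G.Walk a v), A1.IsPath ∧ A2.IsPath ∧
      v ∉ A1.support ∧ u ∉ A2.support ∧
      ∀ w, w ∈ A1.support → w ∈ A2.support → w = a := by
  obtain ⟨-, p1, p2, -, hpq⟩ := hbi a u hau
  by_cases hv1 : v ∈ p1.1.support
  · exact fan_aux p1.1 p2.1 p1.2 p2.2 hpq hv1 hvu hav.symm
  by_cases hv2 : v ∈ p2.1.support
  · exact fan_aux p2.1 p1.1 p2.2 p1.2 (fun w h h' => hpq w h' h) hv2 hvu hav.symm
  obtain ⟨r, hr, hur⟩ := exists_path_avoid hbi hav (Ne.symm hau) (Ne.symm hvu)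
  obtain ⟨z, rr, hrr, hz, honly, hsub⟩ := exists_firstHit r.reverse
      {w | w ∈ p1.1.support ∨ w ∈ p2.1.support}
      (Or.inl p1.1.start_mem_support)
  have hsub' : ∀ w ∈ rr.support, w ∈ r.support := by
    intro w hw
    have := hsub w hw
    rwa [Walk.support_reverse, List.mem_reverse] at this
  have hur' : u ∉ rr.support := fun h => hur (hsub' u h)
  rcases hz with hz | hz
  · exact fan_aux2 p1.1 p2.1 p1.2 p2.2 hpq hv2 rr hrr hz honly hur'
  · exact fan_aux2 p2.1 p1.1 p2.2 p1.2 (fun w h h' => hpq w h' h) hv1 rr hrr hz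
      (fun w h h' => honly w h (Or.elim h' Or.inr Or.inl)) hur'


lemma close_cycle {a b : V} (hab : G.Adj a b) (D : G.Walk b a) (hD : D.IsPath)
    (hgD : s(a, b) ∉ D.edges) {f : Sym2 V} (hfD : f ∈ D.edges) :
    ∃ (c : V) (K : G.Walk c c), K.IsCycle ∧ s(a, b) ∈ K.edges ∧ f ∈ K.edges := by
  refine ⟨a, Walk.cons hab D, Path.cons_isCycle ⟨D, hD⟩ hab hgD, ?_, ?_⟩
  · rw [Walk.edges_cons]; exact List.mem_cons_self
  · rw [Walk.edges_cons]; exact List.mem_cons_of_mem _ hfD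

lemma shared_case (hbi : ∀ a b : V, a ≠ b → Biconnected G a b)
    {a b v : V} (hab : G.Adj a b) (hav : G.Adj a v) (hbv : b ≠ v) :
    ∃ (c : V) (K : G.Walk c c), K.IsCycle ∧ s(a, b) ∈ K.edges ∧ s(a, v) ∈ K.edges := by
  obtain ⟨R, hR, haR⟩ := exists_path_avoid hbi hbv hab.ne hav.ne
  have hcons : (Walk.cons hav.symm Walk.nil).IsPath := by
    rw [Walk.cons_isPath_iff]
    refine ⟨Walk.IsPath.nil, ?_⟩
    simp only [Walk.support_nil, List.mem_singleton]
    exact fun h => hav.ne h.symm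
  have hD : (R.append (Walk.cons hav.symm Walk.nil)).IsPath := by
    refine append_isPath hR hcons ?_
    intro x hxR hxc
    simp only [Walk.support_cons, Walk.support_nil, List.mem_cons,
      List.not_mem_nil, or_false] at hxc
    rcases hxc with rfl | rfl
    · rfl
    · exact absurd hxR haR
  have hg : s(a, b) ∉ (R.append (Walk.cons hav.symm Walk.nil)).edges := by
    rw [Walk.edges_append]
    intro hmem
    rcases List.mem_append.mp hmem with h | h
    · exact haR (R.fst_mem_support_of_mem_edges h)
    · simp only [Walk.edges_cons, Walk.edges_nil, List.mem_singleton] at h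
      rcases Sym2.eq_iff.mp h with ⟨h1, -⟩ | ⟨-, h2⟩
      · exact hav.ne h1
      · exact hbv h2
  refine close_cycle hab _ hD hg ?_
  rw [Walk.edges_append]
  refine List.mem_append.mpr (Or.inr ?_)
  simp only [Walk.edges_cons, Walk.edges_nil, List.mem_singleton]
  exact Sym2.eq_swap

lemma exists_cycle_two_edges [DecidableEq V]
    (hbi : ∀ a b : V, a ≠ b → Biconnected G a b) {a b u v : V}
    (hab : G.Adj a b) (huv : G.Adj u v) (hne : s(a, b) ≠ s(u, v)) :
    ∃ (c : V) (K : G.Walk c c), K.IsCycle ∧ s(a, b) ∈ K.edges ∧ s(u, v) ∈ K.edges := by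
  by_cases hau : a = u
  · have huv' : G.Adj a v := by rw [hau]; exact huv
    have hbv : b ≠ v := fun h => hne (by rw [hau, h])
    obtain ⟨c, K, h1, h2, h3⟩ := shared_case hbi hab huv' hbv
    exact ⟨c, K, h1, h2, by rw [← hau]; exact h3⟩
  by_cases hav : a = v
  · have hua' : G.Adj a u := by rw [hav]; exact huv.symm
    have hbu : b ≠ u := fun h => hne (by rw [hav, h, Sym2.eq_swap])
    obtain ⟨c, K, h1, h2, h3⟩ := shared_case hbi hab hua' hbu
    refine ⟨c, K, h1, h2, ?_⟩
    rw [← hav, Sym2.eq_swap]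
    exact h3
  by_cases hbu : b = u
  · have hbv' : G.Adj b v := by rw [hbu]; exact huv
    have hav' : a ≠ v := hav
    obtain ⟨c, K, h1, h2, h3⟩ := shared_case hbi hab.symm hbv' hav'
    refine ⟨c, K, h1, ?_, ?_⟩
    · rw [Sym2.eq_swap]; exact h2
    · rw [← hbu]; exact h3
  by_cases hbv : b = v
  · have hbu' : G.Adj b u := by rw [hbv]; exact huv.symm
    obtain ⟨c, K, h1, h2, h3⟩ := shared_case hbi hab.symm hbu' hau
    refine ⟨c, K, h1, ?_, ?_⟩
    · rw [Sym2.eq_swap]; exact h2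
    · rw [← hbv, Sym2.eq_swap]; exact h3
  -- main case: a, b, u, v pairwise distinct
  obtain ⟨A1, A2, hA1, hA2, hvA1, huA2, hsh⟩ :=
    exists_fan hbi hau hav (Ne.symm huv.ne)
  have hba : b ≠ a := hab.ne.symm
  by_cases hb1 : b ∈ A1.support
  · have hnaD : a ∉ (A1.dropUntil b hb1).support := not_start_mem_dropUntil hA1 hb1 hba
    have hinner : (Walk.cons huv A2.reverse).IsPath := by
      rw [Walk.cons_isPath_iff]
      refine ⟨hA2.reverse, ?_⟩
      rw [Walk.support_reverse, List.mem_reverse]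
      exact huA2
    have hD : ((A1.dropUntil b hb1).append (Walk.cons huv A2.reverse)).IsPath := by
      refine append_isPath (hA1.dropUntil _) hinner ?_
      intro x hx1 hx2
      rw [Walk.support_cons, List.mem_cons] at hx2
      rcases hx2 with rfl | hx2
      · rfl
      · rw [Walk.support_reverse, List.mem_reverse] at hx2
        have hxa := hsh x (Walk.support_dropUntil_subset _ hb1 hx1) hx2
        rw [hxa] at hx1
        exact absurd hx1 hnaD
    refine close_cycle hab _ hD ?_ ?_
    · rw [Walk.edges_append]
      intro hmem
      rcases List.mem_append.mp hmem with h | h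
      · exact hnaD ((A1.dropUntil b hb1).fst_mem_support_of_mem_edges h)
      · rw [Walk.edges_cons, List.mem_cons] at h
        rcases h with h | h
        · exact hne h
        · rw [Walk.edges_reverse, List.mem_reverse] at h
          have hbA2 : b ∈ A2.support := A2.snd_mem_support_of_mem_edges h
          exact hba (hsh b hb1 hbA2)
    · rw [Walk.edges_append]
      refine List.mem_append.mpr (Or.inr ?_)
      rw [Walk.edges_cons]
      exact List.mem_cons_self
  by_cases hb2 : b ∈ A2.support
  · have hnaD : a ∉ (A2.dropUntil b hb2).support := not_start_mem_dropUntil hA2 hb2 hba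
    have hinner : (Walk.cons huv.symm A1.reverse).IsPath := by
      rw [Walk.cons_isPath_iff]
      refine ⟨hA1.reverse, ?_⟩
      rw [Walk.support_reverse, List.mem_reverse]
      exact hvA1
    have hD : ((A2.dropUntil b hb2).append (Walk.cons huv.symm A1.reverse)).IsPath := by
      refine append_isPath (hA2.dropUntil _) hinner ?_
      intro x hx1 hx2
      rw [Walk.support_cons, List.mem_cons] at hx2
      rcases hx2 with rfl | hx2
      · rfl
      · rw [Walk.support_reverse, List.mem_reverse] at hx2
        have hxa := hsh x hx2 (Walk.support_dropUntil_subset _ hb2 hx1)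
        rw [hxa] at hx1
        exact absurd hx1 hnaD
    refine close_cycle hab _ hD ?_ ?_
    · rw [Walk.edges_append]
      intro hmem
      rcases List.mem_append.mp hmem with h | h
      · exact hnaD ((A2.dropUntil b hb2).fst_mem_support_of_mem_edges h)
      · rw [Walk.edges_cons, List.mem_cons] at h
        rcases h with h | h
        · exact hne (h.trans Sym2.eq_swap)
        · rw [Walk.edges_reverse, List.mem_reverse] at h
          have hbA1 : b ∈ A1.support := A1.snd_mem_support_of_mem_edges h
          exact hba (hsh b hbA1 hb2)
    · rw [Walk.edges_append]
      refine List.mem_append.mpr (Or.inr ?_)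
      rw [Walk.edges_cons, Sym2.eq_swap]
      exact List.mem_cons_self
  -- b is on neither fan path
  obtain ⟨B0, hB0, haB0⟩ := exists_path_avoid hbi hbu hab.ne hau
  obtain ⟨z, Bseg, hBseg, hzT, honly, hsubB⟩ := exists_firstHit B0
      {w | w ∈ A1.support ∨ w ∈ A2.support} (Or.inl A1.end_mem_support)
  have haBseg : a ∉ Bseg.support := fun h => haB0 (hsubB a h)
  have hza : z ≠ a := fun h => haBseg (h ▸ Bseg.end_mem_support)
  rcases hzT with hz1 | hz2
  · -- z on A1
    have hnaD : a ∉ (A1.dropUntil z hz1).support := not_start_mem_dropUntil hA1 hz1 hza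
    have hinner : (Walk.cons huv A2.reverse).IsPath := by
      rw [Walk.cons_isPath_iff]
      refine ⟨hA2.reverse, ?_⟩
      rw [Walk.support_reverse, List.mem_reverse]
      exact huA2
    have hD1 : ((A1.dropUntil z hz1).append (Walk.cons huv A2.reverse)).IsPath := by
      refine append_isPath (hA1.dropUntil _) hinner ?_
      intro x hx1 hx2
      rw [Walk.support_cons, List.mem_cons] at hx2
      rcases hx2 with rfl | hx2
      · rfl
      · rw [Walk.support_reverse, List.mem_reverse] at hx2
        have hxa := hsh x (Walk.support_dropUntil_subset _ hz1 hx1) hx2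
        rw [hxa] at hx1
        exact absurd hx1 hnaD
    have hD : (Bseg.append
        ((A1.dropUntil z hz1).append (Walk.cons huv A2.reverse))).IsPath := by
      refine append_isPath hBseg hD1 ?_
      intro x hxB hxI
      rw [Walk.mem_support_append_iff] at hxI
      refine honly x hxB ?_
      rcases hxI with h | h
      · exact Or.inl (Walk.support_dropUntil_subset _ hz1 h)
      · rw [Walk.support_cons, List.mem_cons] at h
        rcases h with rfl | h
        · exact Or.inl A1.end_mem_support
        · rw [Walk.support_reverse, List.mem_reverse] at h
          exact Or.inr h
    refine close_cycle hab _ hD ?_ ?_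
    · rw [Walk.edges_append, Walk.edges_append]
      intro hmem
      rcases List.mem_append.mp hmem with h | h
      · exact haBseg (Bseg.fst_mem_support_of_mem_edges h)
      rcases List.mem_append.mp h with h | h
      · exact hnaD ((A1.dropUntil z hz1).fst_mem_support_of_mem_edges h)
      · rw [Walk.edges_cons, List.mem_cons] at h
        rcases h with h | h
        · exact hne h
        · rw [Walk.edges_reverse, List.mem_reverse] at h
          exact hb2 (A2.snd_mem_support_of_mem_edges h)
    · rw [Walk.edges_append, Walk.edges_append]
      refine List.mem_append.mpr (Or.inr (List.mem_append.mpr (Or.inr ?_)))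
      rw [Walk.edges_cons]
      exact List.mem_cons_self
  · -- z on A2
    have hnaD : a ∉ (A2.dropUntil z hz2).support := not_start_mem_dropUntil hA2 hz2 hza
    have hinner : (Walk.cons huv.symm A1.reverse).IsPath := by
      rw [Walk.cons_isPath_iff]
      refine ⟨hA1.reverse, ?_⟩
      rw [Walk.support_reverse, List.mem_reverse]
      exact hvA1
    have hD1 : ((A2.dropUntil z hz2).append (Walk.cons huv.symm A1.reverse)).IsPath := by
      refine append_isPath (hA2.dropUntil _) hinner ?_
      intro x hx1 hx2
      rw [Walk.support_cons, List.mem_cons] at hx2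
      rcases hx2 with rfl | hx2
      · rfl
      · rw [Walk.support_reverse, List.mem_reverse] at hx2
        have hxa := hsh x hx2 (Walk.support_dropUntil_subset _ hz2 hx1)
        rw [hxa] at hx1
        exact absurd hx1 hnaD
    have hD : (Bseg.append
        ((A2.dropUntil z hz2).append (Walk.cons huv.symm A1.reverse))).IsPath := by
      refine append_isPath hBseg hD1 ?_
      intro x hxB hxI
      rw [Walk.mem_support_append_iff] at hxI
      refine honly x hxB ?_
      rcases hxI with h | h
      · exact Or.inr (Walk.support_dropUntil_subset _ hz2 h)
      · rw [Walk.support_cons, List.mem_cons] at h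
        rcases h with rfl | h
        · exact Or.inr A2.end_mem_support
        · rw [Walk.support_reverse, List.mem_reverse] at h
          exact Or.inl h
    refine close_cycle hab _ hD ?_ ?_
    · rw [Walk.edges_append, Walk.edges_append]
      intro hmem
      rcases List.mem_append.mp hmem with h | h
      · exact haBseg (Bseg.fst_mem_support_of_mem_edges h)
      rcases List.mem_append.mp h with h | h
      · exact hnaD ((A2.dropUntil z hz2).fst_mem_support_of_mem_edges h)
      · rw [Walk.edges_cons, List.mem_cons] at h
        rcases h with h | h
        · exact hne (h.trans Sym2.eq_swap)
        · rw [Walk.edges_reverse, List.mem_reverse] at h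
          exact hb1 (A1.snd_mem_support_of_mem_edges h)
    · rw [Walk.edges_append, Walk.edges_append]
      refine List.mem_append.mpr (Or.inr (List.mem_append.mpr (Or.inr ?_)))
      rw [Walk.edges_cons, Sym2.eq_swap]
      exact List.mem_cons_self


lemma exists_first_edge {x y : V} (W : G.Walk x y) (hxy : x ≠ y) :
    ∃ z, s(x, z) ∈ W.edges := by
  cases W with
  | nil => exact absurd rfl hxy
  | cons h p => exact ⟨_, by rw [Walk.edges_cons]; exact List.mem_cons_self⟩

lemma cycle_split [DecidableEq V] {c u v : V} {K : G.Walk c c} (hK : K.IsCycle)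
    (he : s(u, v) ∈ K.edges) :
    ∃ Q : G.Walk u v, Q.IsPath ∧ s(u, v) ∉ Q.edges ∧
      ∀ f ∈ K.edges, f ≠ s(u, v) → f ∈ Q.edges := by
  have hu : u ∈ K.support := K.fst_mem_support_of_mem_edges he
  obtain ⟨K1, hcyc, hedge⟩ : ∃ K1 : G.Walk u u, K1.IsCycle ∧
      ∀ f, f ∈ K1.edges ↔ f ∈ K.edges :=
    ⟨K.rotate u hu, hK.rotate hu, fun f => (K.rotate_edges u hu).mem_iff⟩
  have he1 : s(u, v) ∈ K1.edges := (hedge _).mpr he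
  clear hK he hu
  cases K1 with
  | nil => simp at he1
  | cons h T =>
    rename_i w
    rw [Walk.cons_isCycle_iff] at hcyc
    obtain ⟨hTpath, hfe⟩ := hcyc
    rw [Walk.edges_cons, List.mem_cons] at he1
    by_cases hvw : v = w
    · subst hvw
      refine ⟨T.reverse, hTpath.reverse, ?_, ?_⟩
      · rw [Walk.edges_reverse, List.mem_reverse]
        exact hfe
      · intro f hf hfne
        rw [Walk.edges_reverse, List.mem_reverse]
        have hf1 := (hedge f).mpr hf
        rw [Walk.edges_cons, List.mem_cons] at hf1
        rcases hf1 with rfl | hf1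
        · exact absurd rfl hfne
        · exact hf1
    · have hev : s(u, v) ∈ T.edges := by
        rcases he1 with h1 | h1
        · exact absurd (Sym2.congr_right.mp h1) hvw
        · exact h1
      obtain ⟨RT, hRTpath, hRTrev⟩ : ∃ RT : G.Walk u w, RT.IsPath ∧
          ∀ f, f ∈ RT.edges ↔ f ∈ T.edges :=
        ⟨T.reverse, hTpath.reverse, fun f => by rw [Walk.edges_reverse, List.mem_reverse]⟩
      have heRT : s(u, v) ∈ RT.edges := (hRTrev _).mpr hev
      cases RT with
      | nil => simp at heRT
      | cons h' T' =>
        rename_i w'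
        rw [Walk.cons_isPath_iff] at hRTpath
        obtain ⟨hT'path, hu'⟩ := hRTpath
        rw [Walk.edges_cons, List.mem_cons] at heRT
        have hvw' : v = w' := by
          rcases heRT with h1 | h1
          · exact Sym2.congr_right.mp h1
          · exact absurd (T'.fst_mem_support_of_mem_edges h1) hu'
        subst hvw'
        have hwu : w ≠ u := fun hh => h.ne hh.symm
        have htail : (Walk.cons h.symm Walk.nil : G.Walk w u).IsPath := by
          rw [Walk.cons_isPath_iff]
          refine ⟨Walk.IsPath.nil, ?_⟩
          simp only [Walk.support_nil, List.mem_singleton]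
          exact hwu
        have hQrev : (T'.append (Walk.cons h.symm Walk.nil)).IsPath := by
          refine append_isPath hT'path htail ?_
          intro x hx1 hx2
          simp only [Walk.support_cons, Walk.support_nil, List.mem_cons,
            List.not_mem_nil, or_false] at hx2
          rcases hx2 with rfl | rfl
          · rfl
          · exact absurd hx1 hu'
        refine ⟨(T'.append (Walk.cons h.symm Walk.nil)).reverse, hQrev.reverse, ?_, ?_⟩
        · rw [Walk.edges_reverse, List.mem_reverse, Walk.edges_append]
          intro hmem
          rcases List.mem_append.mp hmem with h1 | h1
          · exact hu' (T'.fst_mem_support_of_mem_edges h1)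
          · simp only [Walk.edges_cons, Walk.edges_nil, List.mem_cons,
              List.not_mem_nil, or_false] at h1
            rcases Sym2.eq_iff.mp h1 with ⟨h2, -⟩ | ⟨-, h3⟩
            · exact h.ne h2
            · exact hvw h3
        · intro f hf hfne
          rw [Walk.edges_reverse, List.mem_reverse, Walk.edges_append]
          have hf1 := (hedge f).mpr hf
          rw [Walk.edges_cons, List.mem_cons] at hf1
          rcases hf1 with rfl | hf1
          · refine List.mem_append.mpr (Or.inr ?_)
            simp only [Walk.edges_cons, Walk.edges_nil, List.mem_cons,
              List.not_mem_nil, or_false]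
            exact Sym2.eq_swap
          · have hf2 := (hRTrev f).mpr hf1
            rw [Walk.edges_cons, List.mem_cons] at hf2
            rcases hf2 with rfl | hf2
            · exact absurd rfl hfne
            · exact List.mem_append.mpr (Or.inl hf2)

lemma trail_split {x y a b : V} (W : G.Walk x y) (hW : W.IsTrail)
    (hg : s(a, b) ∈ W.edges) :
    ((G.deleteEdges {s(a, b)}).Reachable x a ∧ (G.deleteEdges {s(a, b)}).Reachable b y) ∨
      ((G.deleteEdges {s(a, b)}).Reachable x b ∧
        (G.deleteEdges {s(a, b)}).Reachable a y) := by
  revert hW hg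
  induction W with
  | nil => intro _ hg; simp at hg
  | @cons p q r hadj W' ih =>
    intro hW hg
    rw [Walk.edges_cons, List.mem_cons] at hg
    have hW' : W'.IsTrail := hW.of_cons
    by_cases heq : s(p, q) = s(a, b)
    · have hnodup := hW.edges_nodup
      rw [Walk.edges_cons] at hnodup
      have hnp : s(a, b) ∉ W'.edges := by
        rw [← heq]
        exact (List.nodup_cons.mp hnodup).1
      have W2 := W'.toDeleteEdges {s(a, b)}
        (fun e' he' => by
          simp only [Set.mem_singleton_iff]
          rintro rfl
          exact hnp he')
      rcases Sym2.eq_iff.mp heq with ⟨rfl, rfl⟩ | ⟨rfl, rfl⟩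
      · exact Or.inl ⟨Reachable.refl _, ⟨W2⟩⟩
      · exact Or.inr ⟨Reachable.refl _, ⟨W2⟩⟩
    · have hg' : s(a, b) ∈ W'.edges := hg.resolve_left (fun hh => heq hh.symm)
      have hadj' : (G.deleteEdges {s(a, b)}).Adj p q := by
        rw [deleteEdges_adj]
        exact ⟨hadj, by simpa using heq⟩
      rcases ih hW' hg' with ⟨h1, h2⟩ | ⟨h1, h2⟩
      · exact Or.inl ⟨hadj'.reachable.trans h1, h2⟩
      · exact Or.inr ⟨hadj'.reachable.trans h1, h2⟩

lemma cycle_two_neighbors [DecidableEq V] {c : V} {C : G.Walk c c} (hC : C.IsCycle)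
    {w : V} (hw : w ∈ C.support) :
    ∃ x y, x ≠ y ∧ s(w, x) ∈ C.edges ∧ s(w, y) ∈ C.edges := by
  obtain ⟨D, hD, hDe⟩ : ∃ D : G.Walk w w, D.IsCycle ∧ ∀ f, f ∈ D.edges ↔ f ∈ C.edges :=
    ⟨C.rotate w hw, hC.rotate hw, fun f => (C.rotate_edges w hw).mem_iff⟩
  cases D with
  | nil => simpa using hD.three_le_length
  | cons h T =>
    rename_i x
    have hx : s(w, x) ∈ (Walk.cons h T).edges := by
      rw [Walk.edges_cons]; exact List.mem_cons_self
    obtain ⟨y, hy⟩ := exists_first_edge T.reverse h.ne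
    have hyT : s(w, y) ∈ T.edges := by rwa [Walk.edges_reverse, List.mem_reverse] at hy
    have hnodup := hD.edges_nodup
    rw [Walk.edges_cons] at hnodup
    have hxy : x ≠ y := by
      rintro rfl
      exact (List.nodup_cons.mp hnodup).1 hyT
    refine ⟨x, y, hxy, (hDe _).mp hx, (hDe _).mp ?_⟩
    rw [Walk.edges_cons]
    exact List.mem_cons_of_mem _ hyT

lemma cycle_not_in_path {H : SimpleGraph V} [DecidableEq V] {c : V} {C : G.Walk c c}
    (hC : C.IsCycle) :
    ∀ {x y : V} (W : H.Walk x y), W.IsPath → (∀ f ∈ C.edges, f ∈ W.edges) → False := by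
  intro x y W
  induction W with
  | nil =>
    intro _ hsub
    cases C with
    | nil => simpa using hC.three_le_length
    | cons h T =>
      have hmem := hsub _ (by rw [Walk.edges_cons]; exact List.mem_cons_self)
      rw [Walk.edges_nil] at hmem
      exact List.not_mem_nil hmem
  | @cons p q r hadj W' ih =>
    intro hW hsub
    have hW'p : p ∉ W'.support := ((Walk.cons_isPath_iff _ _).mp hW).2
    have hp : p ∉ C.support := by
      intro hpC
      obtain ⟨x1, y1, hxy, he1, he2⟩ := cycle_two_neighbors hC hpC
      have hx1 : x1 = q := by
        have hc := hsub _ he1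
        rw [Walk.edges_cons, List.mem_cons] at hc
        rcases hc with h1 | h1
        · exact Sym2.congr_right.mp h1
        · exact absurd (W'.fst_mem_support_of_mem_edges h1) hW'p
      have hy1 : y1 = q := by
        have hc := hsub _ he2
        rw [Walk.edges_cons, List.mem_cons] at hc
        rcases hc with h1 | h1
        · exact Sym2.congr_right.mp h1
        · exact absurd (W'.fst_mem_support_of_mem_edges h1) hW'p
      exact hxy (hx1.trans hy1.symm)
    have hsub' : ∀ f ∈ C.edges, f ∈ W'.edges := by
      intro f hf
      have hc := hsub f hf
      rw [Walk.edges_cons, List.mem_cons] at hc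
      rcases hc with rfl | h1
      · exact absurd (C.fst_mem_support_of_mem_edges hf) hp
      · exact h1
    exact ih ((Walk.cons_isPath_iff _ _).mp hW).1 hsub'

lemma key [DecidableEq V] {H : SimpleGraph V} {u v a b : V}
    (P Q : H.Walk u v) (hP : P.IsPath) (hQ : Q.IsPath)
    (hgQ : s(a, b) ∈ Q.edges) (hgP : s(a, b) ∉ P.edges) :
    ∃ f ∈ P.edges, ∃ (c : V) (C : H.Walk c c),
      C.IsCycle ∧ s(a, b) ∈ C.edges ∧ f ∈ C.edges := by
  set S : Set (Sym2 V) := {e | e ∈ P.edges ∨ e ∈ Q.edges} with hS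
  have hPS : ∀ e ∈ P.edges, e ∈ (fromEdgeSet S).edgeSet := by
    intro e he
    rw [edgeSet_fromEdgeSet]
    exact ⟨Or.inl he, H.not_isDiag_of_mem_edgeSet (P.edges_subset_edgeSet he)⟩
  have hQS : ∀ e ∈ Q.edges, e ∈ (fromEdgeSet S).edgeSet := by
    intro e he
    rw [edgeSet_fromEdgeSet]
    exact ⟨Or.inr he, H.not_isDiag_of_mem_edgeSet (Q.edges_subset_edgeSet he)⟩
  have hQFtrail : (Q.transfer (fromEdgeSet S) hQS).IsTrail := (hQ.transfer hQS).isTrail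
  have hgQF : s(a, b) ∈ (Q.transfer (fromEdgeSet S) hQS).edges := by
    rwa [Walk.edges_transfer]
  have hPn : s(a, b) ∉ (P.transfer (fromEdgeSet S) hPS).edges := by
    rwa [Walk.edges_transfer]
  have hPd := (P.transfer (fromEdgeSet S) hPS).toDeleteEdges {s(a, b)}
    (fun e' he' => by
      simp only [Set.mem_singleton_iff]
      rintro rfl
      exact hPn he')
  have hruv : ((fromEdgeSet S).deleteEdges {s(a, b)}).Reachable u v := ⟨hPd⟩
  have hab : a ≠ b := (Q.adj_of_mem_edges hgQ).ne
  have hreach : ((fromEdgeSet S).deleteEdges {s(a, b)}).Reachable a b := by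
    rcases trail_split _ hQFtrail hgQF with ⟨h1, h2⟩ | ⟨h1, h2⟩
    · exact (h1.symm.trans hruv).trans h2.symm
    · exact (h2.trans hruv.symm).trans h1
  have hFadj : (fromEdgeSet S).Adj a b := by
    rw [fromEdgeSet_adj]
    exact ⟨Or.inr hgQ, hab⟩
  obtain ⟨c, C, hC, hgC⟩ :=
    (adj_and_reachable_delete_edges_iff_exists_cycle).mp ⟨hFadj, hreach⟩
  have hCedges : ∀ f ∈ C.edges, f ∈ P.edges ∨ f ∈ Q.edges := by
    intro f hf
    have hf2 := C.edges_subset_edgeSet hf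
    rw [edgeSet_fromEdgeSet] at hf2
    exact hf2.1
  have hfP : ∃ f ∈ C.edges, f ∈ P.edges := by
    by_contra hno
    push_neg at hno
    exact cycle_not_in_path hC Q hQ
      (fun f hf => (hCedges f hf).resolve_left (hno f hf))
  obtain ⟨f, hfC, hfPm⟩ := hfP
  have hCH : ∀ e ∈ C.edges, e ∈ H.edgeSet := by
    intro e he
    rcases hCedges e he with h | h
    · exact P.edges_subset_edgeSet h
    · exact Q.edges_subset_edgeSet h
  refine ⟨f, hfPm, c, C.transfer H hCH, hC.transfer hCH, ?_, ?_⟩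
  · rwa [Walk.edges_transfer]
  · rwa [Walk.edges_transfer]

end EdgeCycleAux

/-- Let `G` be a simple graph with at least 3 vertices in which every two distinct
vertices are biconnected, let `e` be an edge of `G` with endpoints `u` and `v`, and let
`P` be a path from `u` to `v` in `G − e`. Then for every edge `g` of `G − e`, either `g`
is an edge of `P`, or there exists an edge `f` of `P` such that `g` and `f` lie on a
common cycle of `G − e`. -/
theorem edge_on_cycle_with_path_edge {V : Type*} (G : SimpleGraph V)
    (h3 : ∃ x y z : V, x ≠ y ∧ x ≠ z ∧ y ≠ z)
    (hbi : ∀ a b : V, a ≠ b → Biconnected G a b)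
    (u v : V) (he : G.Adj u v)
    (P : (G.deleteEdges {s(u, v)}).Path u v)
    (g : Sym2 V) (hg : g ∈ (G.deleteEdges {s(u, v)}).edgeSet) :
    g ∈ P.1.edges ∨
      ∃ f ∈ P.1.edges, ∃ (c : V) (C : (G.deleteEdges {s(u, v)}).Walk c c),
        C.IsCycle ∧ g ∈ C.edges ∧ f ∈ C.edges := by
  classical
  by_cases hmem : g ∈ P.1.edges
  · exact Or.inl hmem
  right
  induction g using Sym2.ind with
  | _ a b =>
  rw [edgeSet_deleteEdges, Set.mem_diff] at hg
  obtain ⟨hgG, hgne⟩ := hg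
  rw [Set.mem_singleton_iff] at hgne
  have hab : G.Adj a b := hgG
  obtain ⟨c0, K, hK, hgK, heK⟩ := EdgeCycleAux.exists_cycle_two_edges hbi hab he hgne
  obtain ⟨Q0, hQ0, heQ0, hcov⟩ := EdgeCycleAux.cycle_split hK heK
  have hgQ0 : s(a, b) ∈ Q0.edges := hcov _ hgK hgne
  have hQ0e : ∀ e' ∈ Q0.edges, e' ∈ (G.deleteEdges {s(u, v)}).edgeSet := by
    intro e' he'
    rw [edgeSet_deleteEdges, Set.mem_diff, Set.mem_singleton_iff]
    refine ⟨Q0.edges_subset_edgeSet he', ?_⟩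
    rintro rfl
    exact heQ0 he'
  exact EdgeCycleAux.key P.1 (Q0.transfer _ hQ0e) P.2 (hQ0.transfer hQ0e)
    (by rwa [SimpleGraph.Walk.edges_transfer]) hmem
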